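/- With the WaterSIC scaling factors α_i = α·det(Σ_X)^{1/(2n)}/U_{i,i}, let 𝒜 = diag(α_1,…,α_n), let W ∈ ℝⁿ, let Ŵ = c_SIC(U·W), and define the integer output Z = 𝒜^{−1}·Ŵ ∈ ℤⁿ. Then Z ∈ 𝒜^{−1}·W − Ũ·[−1/2, 1/2)ⁿ, where Ũ = α·det(Σ_X)^{1/(2n)}·(U𝒜)^{−1} is an upper triangular matrix with all diagonal entries equal to 1, and in particular det(Ũ) = 1. -/

import Mathlib

open Finset

/-- The SIC (successive interference cancellation) quantizer with respect to an
upper-triangular matrix `U` and per-coordinate spacings `α`, defined by backward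
recursion `c_SIC(y)_i = α_i ⌊(y_i − Σ_{j>i} U_{i,j} c_SIC(y)_j)/(α_i U_{i,i}) + 1/2⌋`. -/
noncomputable def cSIC {n : ℕ} (U : Matrix (Fin n) (Fin n) ℝ) (α : Fin n → ℝ)
    (y : Fin n → ℝ) : Fin n → ℝ
  | i =>
    α i * ((round ((y i - ∑ j ∈ (Finset.univ.filter fun j => i < j).attach,
        U i j.1 * cSIC U α y j.1) / (α i * U i i)) : ℤ) : ℝ)
termination_by i => n - i.1
decreasing_by
  have h := j.2
  simp only [Finset.mem_filter, Finset.mem_univ, true_and] at h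
  have h2 : (j.1 : ℕ) < n := j.1.isLt
  have h3 : (i : ℕ) < (j.1 : ℕ) := h
  omega

/-- with WaterSIC scalings `α_i = α·det(Σ_X)^{1/(2n)}/U_{i,i}`
(`Σ_X = UᵀU`, `𝒜 = diag(α_1,…,α_n)`) and `Ŵ = c_SIC(U·W)`, the integer output
`Z = 𝒜⁻¹·Ŵ` satisfies `Z ∈ ℤⁿ` and `Z ∈ 𝒜⁻¹·W − Ũ·[−1/2,1/2)ⁿ`, where
`Ũ = α·det(Σ_X)^{1/(2n)}·(U𝒜)⁻¹` is upper triangular with unit diagonal, and in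
particular `det Ũ = 1`. -/
theorem waterSIC_integer_output {n : ℕ} (hn : 1 ≤ n)
    (U : Matrix (Fin n) (Fin n) ℝ)
    (hUtri : ∀ i j : Fin n, j < i → U i j = 0)
    (hUdiag : ∀ i : Fin n, 0 < U i i)
    (α : ℝ) (hα : 0 < α) (W : Fin n → ℝ)
    (αv : Fin n → ℝ)
    (hαv : αv = fun i => α * (U.transpose * U).det ^ ((1 : ℝ) / (2 * n)) / U i i)
    (What Z : Fin n → ℝ) (hWhat : What = cSIC U αv (U.mulVec W))
    (hZ : Z = fun i => What i / αv i)
    (Ut : Matrix (Fin n) (Fin n) ℝ)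
    (hUt : Ut = (α * (U.transpose * U).det ^ ((1 : ℝ) / (2 * n))) •
      (U * Matrix.diagonal αv)⁻¹) :
    (∀ i : Fin n, ∃ m : ℤ, Z i = (m : ℝ)) ∧
    (∃ t : Fin n → ℝ, (∀ i : Fin n, t i ∈ Set.Ico (-(1 / 2) : ℝ) (1 / 2)) ∧
      Z = (fun i => W i / αv i) - Ut.mulVec t) ∧
    (∀ i j : Fin n, j < i → Ut i j = 0) ∧ (∀ i : Fin n, Ut i i = 1) ∧
    Ut.det = 1 := by
  -- Set up `c`.
  set c : ℝ := α * (U.transpose * U).det ^ ((1 : ℝ) / (2 * n)) with hc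
  have hdetU : 0 < (U.transpose * U).det := by
    rw [Matrix.det_mul, Matrix.det_transpose]
    have : 0 < U.det := by
      rw [Matrix.det_of_upperTriangular (fun i j h => hUtri i j h)]
      exact Finset.prod_pos fun i _ => hUdiag i
    positivity
  have hcpos : 0 < c := by
    have := Real.rpow_pos_of_pos hdetU ((1 : ℝ) / (2 * n))
    positivity
  have hcne : c ≠ 0 := ne_of_gt hcpos
  have hαvpos : ∀ i, 0 < αv i := by
    intro i; rw [hαv]; exact div_pos hcpos (hUdiag i)
  have hαvne : ∀ i, αv i ≠ 0 := fun i => ne_of_gt (hαvpos i)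
  have hαvU : ∀ i, αv i * U i i = c := by
    intro i; rw [hαv]; exact div_mul_cancel₀ c (ne_of_gt (hUdiag i))
  -- the rounding quantities
  set y : Fin n → ℝ := U.mulVec W with hy
  set r : Fin n → ℝ := fun i =>
    (y i - ∑ j ∈ (Finset.univ.filter fun j => i < j), U i j * What j) / (αv i * U i i)
    with hr
  have hrec : ∀ i, What i = αv i * ((round (r i) : ℤ) : ℝ) := by
    intro i
    conv_lhs => rw [hWhat, cSIC]
    rw [← hWhat, hr]
    congr 2
    rw [Finset.sum_attach ((Finset.univ.filter fun j => i < j))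
      (fun j => U i j * What j)]
  have hZr : ∀ i, Z i = ((round (r i) : ℤ) : ℝ) := by
    intro i
    rw [hZ]; simp only
    rw [hrec i, mul_div_cancel_left₀ _ (hαvne i)]
  refine ⟨fun i => ⟨round (r i), hZr i⟩, ?_, ?_⟩
  · -- main membership claim
    set t : Fin n → ℝ := fun i => r i - ((round (r i) : ℤ) : ℝ) with ht
    have htmem : ∀ i, t i ∈ Set.Ico (-(1 / 2) : ℝ) (1 / 2) := by
      intro i
      have h1 : ((round (r i) : ℤ) : ℝ) ≤ r i + 1 / 2 := by
        rw [round_eq]; exact Int.floor_le _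
      have h2 : r i + 1 / 2 < ((round (r i) : ℤ) : ℝ) + 1 := by
        rw [round_eq]; exact Int.lt_floor_add_one _
      constructor <;> simp only [ht] <;> linarith
    -- key componentwise identity : U.mulVec What = y - c • t
    have hkey : U.mulVec What = fun i => y i - c * t i := by
      funext i
      have hsplit : ∀ j : Fin n, j ∈ (Finset.univ.filter fun j => ¬ i < j) →
          j ≠ i → U i j * What j = 0 := by
        intro j hj hji
        simp only [Finset.mem_filter, Finset.mem_univ, true_and, not_lt] at hj
        rw [hUtri i j (lt_of_le_of_ne hj hji), zero_mul]
      have hsum : U.mulVec What i =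
          U i i * What i + ∑ j ∈ (Finset.univ.filter fun j => i < j), U i j * What j := by
        rw [Matrix.mulVec, dotProduct]
        rw [← Finset.sum_filter_add_sum_filter_not Finset.univ (fun j => i < j)
          (fun j => U i j * What j)]
        rw [add_comm]
        congr 1
        rw [Finset.sum_eq_single_of_mem i (by simp) hsplit]
      rw [hsum, hrec i]
      have hne : αv i * U i i ≠ 0 := mul_ne_zero (hαvne i) (ne_of_gt (hUdiag i))
      have hcr : c * r i = y i - ∑ j ∈ (Finset.univ.filter fun j => i < j), U i j * What j := by
        rw [← hαvU i, hr]
        field_simp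
        exact mul_div_cancel_left₀ _ hne
      have : U i i * (αv i * ((round (r i) : ℤ) : ℝ)) = c * (r i - t i) := by
        rw [show r i - t i = ((round (r i) : ℤ) : ℝ) from by rw [ht]; ring, ← hαvU i]; ring
      rw [this]
      rw [mul_sub, hcr]; ring
    -- invertibility of B = U * diagonal αv
    set B : Matrix (Fin n) (Fin n) ℝ := U * Matrix.diagonal αv with hB
    have hBtri : B.BlockTriangular id := by
      intro i j hij
      rw [hB, Matrix.mul_diagonal]
      rw [hUtri i j hij, zero_mul]
    have hBdiag : ∀ i, B i i = c := by
      intro i; rw [hB, Matrix.mul_diagonal, mul_comm, hαvU i]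
    have hBdet : B.det = c ^ n := by
      rw [Matrix.det_of_upperTriangular hBtri]
      simp [hBdiag]
    have hBdetne : B.det ≠ 0 := by rw [hBdet]; exact pow_ne_zero n hcne
    have hBunit : IsUnit B.det := isUnit_iff_ne_zero.mpr hBdetne
    -- the vector v
    have hBv : B.mulVec ((fun i => W i / αv i) - Z) = c • t := by
      have h1 : (Matrix.diagonal αv).mulVec ((fun i => W i / αv i) - Z) = W - What := by
        funext i
        simp only [Matrix.mulVec_diagonal, Pi.sub_apply]
        rw [hZ]
        simp only [Pi.sub_apply]
        rw [div_sub_div_same, mul_comm, div_mul_cancel₀ _ (hαvne i)]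
      rw [hB, ← Matrix.mulVec_mulVec, h1, Matrix.mulVec_sub, hkey]
      funext i
      simp [hy]
    have hUtmul : Ut.mulVec t = (fun i => W i / αv i) - Z := by
      rw [hUt, Matrix.smul_mulVec]
      have : t = (c⁻¹ • (B.mulVec ((fun i => W i / αv i) - Z))) := by
        rw [hBv, smul_smul, inv_mul_cancel₀ hcne, one_smul]
      rw [this, Matrix.mulVec_smul, Matrix.mulVec_mulVec, Matrix.nonsing_inv_mul B hBunit,
        Matrix.one_mulVec, smul_smul, mul_inv_cancel₀ hcne, one_smul]
    refine ⟨t, htmem, ?_⟩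
    funext i
    have h := congrFun hUtmul i
    simp only [Pi.sub_apply] at h ⊢
    linarith
  · -- triangularity, diagonal, determinant
    set B : Matrix (Fin n) (Fin n) ℝ := U * Matrix.diagonal αv with hB
    have hBtri : B.BlockTriangular id := by
      intro i j hij
      rw [hB, Matrix.mul_diagonal]
      rw [hUtri i j hij, zero_mul]
    have hBdiag : ∀ i, B i i = c := by
      intro i; rw [hB, Matrix.mul_diagonal, mul_comm, hαvU i]
    have hBdet : B.det = c ^ n := by
      rw [Matrix.det_of_upperTriangular hBtri]
      simp [hBdiag]
    have hBdetne : B.det ≠ 0 := by rw [hBdet]; exact pow_ne_zero n hcne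
    have hBunit : IsUnit B.det := isUnit_iff_ne_zero.mpr hBdetne
    haveI : Invertible B := B.invertibleOfIsUnitDet hBunit
    have hinvtri : B⁻¹.BlockTriangular id :=
      Matrix.blockTriangular_inv_of_blockTriangular hBtri
    have hUttri : ∀ i j : Fin n, j < i → Ut i j = 0 := by
      intro i j hij
      rw [hUt, Matrix.smul_apply, hinvtri hij, smul_zero]
    have hUtdiag : ∀ i : Fin n, Ut i i = 1 := by
      intro i
      rw [hUt, Matrix.smul_apply, Matrix.inv_def, Matrix.smul_apply,
        Matrix.adjugate_apply, hBdet]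
      have htri2 : (B.updateRow i (Pi.single i 1)).BlockTriangular id := by
        intro k l hkl
        by_cases hk : k = i
        · subst hk
          rw [Matrix.updateRow_self]
          exact Pi.single_eq_of_ne (ne_of_lt hkl) 1
        · rw [Matrix.updateRow_ne hk]
          exact hBtri hkl
      rw [Matrix.det_of_upperTriangular htri2]
      have : ∀ k, (B.updateRow i (Pi.single i 1)) k k = if k = i then 1 else c := by
        intro k
        by_cases hk : k = i
        · subst hk; rw [Matrix.updateRow_self, if_pos rfl, Pi.single_eq_same]
        · rw [Matrix.updateRow_ne hk, if_neg hk, hBdiag]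
      rw [Finset.prod_congr rfl (fun k _ => this k)]
      rw [← Finset.prod_erase_mul Finset.univ _ (Finset.mem_univ i), if_pos rfl, mul_one]
      rw [Finset.prod_congr rfl (fun k hk => if_neg (Finset.ne_of_mem_erase hk))]
      rw [Finset.prod_const, Finset.card_erase_of_mem (Finset.mem_univ i), Finset.card_univ,
        Fintype.card_fin]
      have hpow : c ^ n = c * c ^ (n - 1) := by
        conv_lhs => rw [show n = (n - 1) + 1 from by omega]
        rw [pow_succ]; ring
      simp only [smul_eq_mul]
      rw [hpow]
      field_simp
      exact Ring.mul_inverse_cancel _ (isUnit_iff_ne_zero.mpr (mul_ne_zero hcne (pow_ne_zero _ hcne)))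
    refine ⟨hUttri, hUtdiag, ?_⟩
    rw [Matrix.det_of_upperTriangular (fun i j h => hUttri i j h)]
    simp [hUtdiag]
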